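/- Let H be an abelian group with an automorphism t (making H a ℤ[t,t^{-1}]-module), let k ≥ 1, z ∈ S¹ ⊂ ℂ, and let χ: H → S¹ be a character satisfying χ(t^k h) = χ(h) for all h ∈ H. Then the map α_{(z,χ)}: ℤ ⋉ H → U(k) sending (n, h) to z^n · P^n · diag(χ(h), χ(th), ..., χ(t^{k-1}h)), where P is the k×k cyclic permutation matrix, is a group homomorphism into the unitary group U(k). -/

import Mathlib

open Matrix

section Aux
open Fin.CommRing
variable {k : ℕ} [NeZero k]

def Pmat (k : ℕ) [NeZero k] : Matrix (Fin k) (Fin k) ℂ :=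
  of fun i j => if i = j + 1 then 1 else 0

lemma pmat_apply (i j : Fin k) : Pmat k i j = if i = j + 1 then 1 else 0 := rfl

lemma pmat_apply' (i j : Fin k) : Pmat k i j = if j = i - 1 then 1 else 0 := by
  rw [pmat_apply]
  congr 1
  simp only [eq_iff_iff]
  constructor
  · rintro rfl; simp
  · rintro rfl; simp

lemma Pmat_mem : Pmat k ∈ Matrix.unitaryGroup (Fin k) ℂ := by
  rw [Matrix.mem_unitaryGroup_iff]
  ext i j
  simp only [Matrix.mul_apply, Matrix.star_apply, pmat_apply', apply_ite (star : ℂ → ℂ),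
    star_one, star_zero, ite_mul, one_mul, zero_mul, mul_ite, mul_one, mul_zero]
  simp [Finset.sum_ite_eq, Finset.sum_ite_eq', Matrix.one_apply, sub_left_inj]
  exact (if_congr eq_comm rfl rfl)

def Pu (k : ℕ) [NeZero k] : Matrix.unitaryGroup (Fin k) ℂ := ⟨Pmat k, Pmat_mem⟩

lemma Pu_apply (i j : Fin k) :
    ((Pu k : Matrix.unitaryGroup (Fin k) ℂ) : Matrix (Fin k) (Fin k) ℂ) i j
      = if i = j + 1 then 1 else 0 := rfl

lemma Pu_inv_apply (i j : Fin k) :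
    (((Pu k)⁻¹ : Matrix.unitaryGroup (Fin k) ℂ) : Matrix (Fin k) (Fin k) ℂ) i j
      = if i = j - 1 then 1 else 0 := by
  have : (((Pu k)⁻¹ : Matrix.unitaryGroup (Fin k) ℂ) : Matrix (Fin k) (Fin k) ℂ)
      = star (Pmat k) := rfl
  rw [this]
  rw [Matrix.star_apply, pmat_apply']
  simp [apply_ite (star : ℂ → ℂ), eq_comm]

lemma Pu_zpow_apply (m : ℤ) (i j : Fin k) :
    (((Pu k) ^ m : Matrix.unitaryGroup (Fin k) ℂ) : Matrix (Fin k) (Fin k) ℂ) i j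
      = if i = j + (m : Fin k) then 1 else 0 := by
  induction m using Int.induction_on generalizing i j with
  | zero => simp [Matrix.one_apply]
  | succ m ih =>
      have h1 : (Pu k) ^ ((m : ℤ) + 1) = (Pu k) ^ (m : ℤ) * Pu k := zpow_add_one _ _
      rw [h1, Submonoid.coe_mul, Matrix.mul_apply]
      simp only [ih, Pu_apply]
      simp only [mul_ite, mul_one, mul_zero, Finset.sum_ite_eq', Finset.mem_univ, if_true]
      push_cast
      ring_nf
  | pred m ih =>
      have h1 : (Pu k) ^ (-(m : ℤ) - 1) = (Pu k) ^ (-(m : ℤ)) * (Pu k)⁻¹ := zpow_sub_one _ _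
      rw [h1, Submonoid.coe_mul, Matrix.mul_apply]
      simp only [ih, Pu_inv_apply]
      simp only [mul_ite, mul_one, mul_zero, Finset.sum_ite_eq', Finset.mem_univ, if_true]
      push_cast
      ring_nf

lemma finAdd_modEq (a b : Fin k) : (((a + b : Fin k) : ℕ) : ℤ) ≡ (a : ℤ) + (b : ℤ) [ZMOD k] := by
  have : ((a + b : Fin k) : ℕ) = ((a : ℕ) + (b : ℕ)) % k := Fin.val_add a b
  rw [this]
  push_cast
  exact Int.emod_emod_of_dvd _ dvd_rfl

lemma finOne_modEq : (((1 : Fin k) : ℕ) : ℤ) ≡ 1 [ZMOD k] := by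
  have : ((1 : Fin k) : ℕ) = 1 % k := Fin.val_one' k
  rw [this]; push_cast
  exact Int.emod_emod_of_dvd _ dvd_rfl

lemma finSub_one_modEq (a : Fin k) : (((a - 1 : Fin k) : ℕ) : ℤ) ≡ (a : ℤ) - 1 [ZMOD k] := by
  have h1 : (((a - 1 + 1 : Fin k) : ℕ) : ℤ) ≡ ((a - 1 : Fin k) : ℤ) + ((1 : Fin k) : ℤ) [ZMOD k] :=
    finAdd_modEq _ _
  rw [sub_add_cancel] at h1
  have h2 := h1.trans ((Int.ModEq.refl ((a-1 : Fin k) : ℤ)).add finOne_modEq)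
  have := h2.sub_right 1
  simpa using this.symm

lemma finIntCast_modEq (m : ℤ) : ((((m : Fin k)) : ℕ) : ℤ) ≡ m [ZMOD k] := by
  induction m using Int.induction_on with
  | zero => simp
  | succ m ih =>
      have : ((((m : ℤ) + 1) : ℤ) : Fin k) = ((m : ℤ) : Fin k) + 1 := by push_cast; ring
      rw [this]
      exact (finAdd_modEq _ _).trans (ih.add finOne_modEq)
  | pred m ih =>
      have : (((-(m : ℤ) - 1) : ℤ) : Fin k) = ((-(m : ℤ) : ℤ) : Fin k) - 1 := by push_cast; ring
      rw [this]
      exact (finSub_one_modEq _).trans (ih.sub_right 1)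

section chi
variable {H : Type*} [AddCommGroup H] (t : AddAut H) (χ : AddChar H ℂ)

lemma chi_zpow_k (hper : ∀ h : H, χ ((k • t) h) = χ h) (q : ℤ) (h : H) :
    χ ((((k : ℤ) * q) • t) h) = χ h := by
  induction q using Int.induction_on generalizing h with
  | zero => simp
  | succ q ih =>
      have : ((k : ℤ) * ((q : ℤ) + 1)) • (t : AddAut H) = ((k : ℤ) * q) • t + (k : ℤ) • t := by
        rw [← add_zsmul]; ring_nf
      rw [this]
      show χ ((((k : ℤ) * q) • t) (((k : ℤ) • t) h)) = χ h
      rw [ih, natCast_zsmul, hper]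
  | pred q ih =>
      have : ((k : ℤ) * (-(q : ℤ) - 1)) • (t : AddAut H) = ((k : ℤ) * (-q)) • t + (-(k : ℤ)) • t := by
        rw [← add_zsmul]; ring_nf
      rw [this]
      show χ ((((k : ℤ) * (-(q:ℤ))) • t) (((-(k : ℤ)) • t) h)) = χ h
      rw [ih]
      have := hper (((-(k : ℤ)) • t) h)
      rw [← natCast_zsmul t k] at this
      rw [← this]
      congr 1
      rw [← AddAut.add_apply, ← add_zsmul]
      simp

lemma chi_zpow_congr (hper : ∀ h : H, χ ((k • t) h) = χ h) {a b : ℤ}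
    (hab : a ≡ b [ZMOD k]) (h : H) : χ ((a • t) h) = χ ((b • t) h) := by
  obtain ⟨q, hq⟩ : (k : ℤ) ∣ a - b := Int.ModEq.dvd hab.symm
  have : a = (k : ℤ) * q + b := by linarith
  rw [this, add_zsmul, AddAut.add_apply, chi_zpow_k t χ hper]

end chi

lemma conj_mul_self_of_norm_one {c : ℂ} (hc : ‖c‖ = 1) : (starRingEnd ℂ) c * c = 1 := by
  rw [mul_comm, Complex.mul_conj]
  norm_cast
  rw [Complex.normSq_eq_norm_sq]
  simp [hc]

lemma diag_mem {d : Fin k → ℂ} (hd : ∀ i, ‖d i‖ = 1) :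
    Matrix.diagonal d ∈ Matrix.unitaryGroup (Fin k) ℂ := by
  rw [Matrix.mem_unitaryGroup_iff']
  rw [show star (Matrix.diagonal d) = Matrix.diagonal (fun i => (starRingEnd ℂ) (d i)) from
    Matrix.diagonal_conjTranspose d]
  rw [Matrix.diagonal_mul_diagonal]
  rw [show (fun i => (starRingEnd ℂ) (d i) * d i) = fun _ => (1:ℂ) from
    funext fun i => conj_mul_self_of_norm_one (hd i)]
  exact Matrix.diagonal_one

lemma smul_mem_unitary {c : ℂ} (hc : ‖c‖ = 1) {A : Matrix (Fin k) (Fin k) ℂ}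
    (hA : A ∈ Matrix.unitaryGroup (Fin k) ℂ) : c • A ∈ Matrix.unitaryGroup (Fin k) ℂ := by
  rw [Matrix.mem_unitaryGroup_iff'] at hA ⊢
  rw [star_smul, smul_mul_smul_comm]
  rw [hA]
  have : star c * c = 1 := conj_mul_self_of_norm_one hc
  rw [show (star c * c) • (1 : Matrix (Fin k) (Fin k) ℂ) = ((star c * c : ℂ)) • 1 from rfl, this, one_smul]

lemma diag_mul_Pu_zpow (m : ℤ) (d : Fin k → ℂ) :
    Matrix.diagonal d * ((Pu k ^ m : Matrix.unitaryGroup (Fin k) ℂ) : Matrix (Fin k) (Fin k) ℂ)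
      = ((Pu k ^ m : Matrix.unitaryGroup (Fin k) ℂ) : Matrix (Fin k) (Fin k) ℂ)
        * Matrix.diagonal (fun j => d (j + (m : Fin k))) := by
  ext i j
  rw [Matrix.diagonal_mul, Matrix.mul_diagonal, Pu_zpow_apply]
  split_ifs with h
  · rw [h]; ring
  · ring

lemma chi_shift {H : Type*} [AddCommGroup H] (t : AddAut H) (χ : AddChar H ℂ)
    (hper : ∀ h : H, χ ((k • t) h) = χ h) (m : ℤ) (i : Fin k) (h : H) :
    χ (((((i + (m : Fin k)) : Fin k) : ℕ) • t) h) = χ (((i : ℕ) • t) ((m • t) h)) := by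
  have e1 : ((i : ℕ) • t) ((m • t) h) = (((i : ℤ) + m) • t) h := by
    rw [add_zsmul, AddAut.add_apply, natCast_zsmul]
  rw [e1, ← natCast_zsmul t (((i + (m : Fin k)) : Fin k) : ℕ)]
  exact chi_zpow_congr t χ hper
    ((finAdd_modEq i (m : Fin k)).trans ((Int.ModEq.refl (i : ℤ)).add (finIntCast_modEq m))) h

end Aux

/-- Let `H` be an abelian group with an automorphism `t`, `k ≥ 1`, `z` on the unit
circle, and `χ : H → S¹` a character with `χ(t^k h) = χ(h)`.  Then
`α_{(z,χ)}(n, h) = zⁿ · Pⁿ · diag(χ(h), χ(th), …, χ(t^{k-1}h))`, where `P` is the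
`k × k` cyclic permutation matrix, defines a homomorphism `ℤ ⋉ H → U(k)`:
each value is a unitary matrix, and `α((n,h)·(m,g)) = α(n,h) · α(m,g)` for the
semidirect-product multiplication `(n,h)(m,g) = (n+m, tᵐh + g)`. -/
theorem alpha_z_chi_is_unitary_rep (H : Type*) [AddCommGroup H] (t : AddAut H)
    (k : ℕ) (hk : 1 ≤ k) (z : ℂ) (hz : ‖z‖ = 1)
    (χ : AddChar H ℂ) (hχ : ∀ h : H, ‖χ h‖ = 1)
    (hper : ∀ h : H, χ ((k • t) h) = χ h) :
    letI : NeZero k := ⟨Nat.one_le_iff_ne_zero.mp hk⟩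
    ∃ P : Matrix.unitaryGroup (Fin k) ℂ,
      (∀ i j : Fin k, (P : Matrix (Fin k) (Fin k) ℂ) i j = if i = j + 1 then 1 else 0) ∧
      (let α : ℤ × H → Matrix (Fin k) (Fin k) ℂ := fun p =>
        z ^ p.1 • ((P ^ p.1 : Matrix.unitaryGroup (Fin k) ℂ) :
            Matrix (Fin k) (Fin k) ℂ) *
          Matrix.diagonal (fun i : Fin k => χ (((i : ℕ) • t) p.2))
      (∀ n : ℤ, ∀ h : H, α (n, h) ∈ Matrix.unitaryGroup (Fin k) ℂ) ∧
      (∀ n m : ℤ, ∀ h g : H, α (n + m, (m • t) h + g) = α (n, h) * α (m, g))) := by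
  letI : NeZero k := ⟨Nat.one_le_iff_ne_zero.mp hk⟩
  have hz0 : z ≠ 0 := by intro h; rw [h] at hz; simp at hz
  refine ⟨Pu k, fun i j => rfl, ?_⟩
  intro α
  constructor
  · intro n h
    show z ^ n • ((Pu k ^ n : Matrix.unitaryGroup (Fin k) ℂ) : Matrix (Fin k) (Fin k) ℂ) *
        Matrix.diagonal (fun i : Fin k => χ (((i : ℕ) • t) h)) ∈ _
    exact mul_mem
      (smul_mem_unitary (by rw [norm_zpow, hz, _root_.one_zpow]) (Pu k ^ n).2)
      (diag_mem (fun i => hχ _))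
  · intro n m h g
    show z ^ (n + m) • ((Pu k ^ (n + m) : Matrix.unitaryGroup (Fin k) ℂ) :
          Matrix (Fin k) (Fin k) ℂ) *
        Matrix.diagonal (fun i : Fin k => χ (((i : ℕ) • t) ((m • t) h + g)))
      = (z ^ n • ((Pu k ^ n : Matrix.unitaryGroup (Fin k) ℂ) : Matrix (Fin k) (Fin k) ℂ) *
          Matrix.diagonal (fun i : Fin k => χ (((i : ℕ) • t) h))) *
        (z ^ m • ((Pu k ^ m : Matrix.unitaryGroup (Fin k) ℂ) : Matrix (Fin k) (Fin k) ℂ) *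
          Matrix.diagonal (fun i : Fin k => χ (((i : ℕ) • t) g)))
    set Pn := ((Pu k ^ n : Matrix.unitaryGroup (Fin k) ℂ) : Matrix (Fin k) (Fin k) ℂ)
    set Pm := ((Pu k ^ m : Matrix.unitaryGroup (Fin k) ℂ) : Matrix (Fin k) (Fin k) ℂ)
    set Dh := Matrix.diagonal (fun i : Fin k => χ (((i : ℕ) • t) h)) with hDh
    set Dg := Matrix.diagonal (fun i : Fin k => χ (((i : ℕ) • t) g)) with hDg
    have hconj : Dh * Pm
        = Pm * Matrix.diagonal (fun i : Fin k => χ (((i : ℕ) • t) ((m • t) h))) := by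
      rw [hDh, diag_mul_Pu_zpow]
      congr 1
      exact congrArg _ (funext fun j => chi_shift t χ hper m j h)
    have hPnm : ((Pu k ^ (n + m) : Matrix.unitaryGroup (Fin k) ℂ) :
        Matrix (Fin k) (Fin k) ℂ) = Pn * Pm := by
      rw [_root_.zpow_add]; rfl
    have hDsum : Matrix.diagonal (fun i : Fin k => χ (((i : ℕ) • t) ((m • t) h + g)))
        = Matrix.diagonal (fun i : Fin k => χ (((i : ℕ) • t) ((m • t) h))) * Dg := by
      rw [hDg, Matrix.diagonal_mul_diagonal]
      rw [show (fun i : Fin k => χ (((i : ℕ) • t) ((m • t) h + g)))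
          = fun i : Fin k => χ (((i : ℕ) • t) ((m • t) h)) * χ (((i : ℕ) • t) g) from
        funext fun i => by rw [map_add, AddChar.map_add_eq_mul]]
    rw [hPnm, hDsum, zpow_add₀ hz0]
    have hM : Pn * Pm * (Matrix.diagonal (fun i : Fin k => χ (((i : ℕ) • t) ((m • t) h))) * Dg)
        = (Pn * Dh) * (Pm * Dg) := by
      rw [mul_assoc Pn Dh, ← mul_assoc Dh, hconj, mul_assoc Pm, mul_assoc Pn]
    rw [smul_mul_assoc, hM]
    conv_rhs => rw [smul_mul_assoc, smul_mul_assoc, smul_mul_assoc, mul_smul_comm, smul_smul]
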